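/- Fix c ∈ (0, 1] and let t be uniformly distributed on the unit sphere S². Define F(t) = (1/2)(1 + t₁² + (1−c)(t₂² + t₃²)). Then F takes values in [(2−c)/2, 1], and its probability density function is f(F) = 1/√(c(2F − 2 + c)) for F ∈ ((2−c)/2, 1] and 0 otherwise. -/

import Mathlib

open MeasureTheory Metric Set

open scoped ENNReal Real Pointwise

noncomputable def sphereUniform :
    Measure (sphere (0 : EuclideanSpace ℝ (Fin 3)) 1) :=
  (((volume : Measure (EuclideanSpace ℝ (Fin 3))).toSphere) univ)⁻¹ •
    ((volume : Measure (EuclideanSpace ℝ (Fin 3))).toSphere)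

/-- Phase-flip teleportation fidelity F(t) = (1 + t₁² + (1−c)(t₂²+t₃²))/2. -/
noncomputable def Fpf (c : ℝ) (t : sphere (0 : EuclideanSpace ℝ (Fin 3)) 1) : ℝ :=
  (1 / 2) * (1 + ((t : EuclideanSpace ℝ (Fin 3)) 0) ^ 2 +
    (1 - c) * (((t : EuclideanSpace ℝ (Fin 3)) 1) ^ 2 +
               ((t : EuclideanSpace ℝ (Fin 3)) 2) ^ 2))

lemma norm_E2 (y : EuclideanSpace ℝ (Fin 2)) : ‖y‖ = Real.sqrt (y 0 ^ 2 + y 1 ^ 2) := by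
  rw [EuclideanSpace.norm_eq, Fin.sum_univ_two]
  norm_num [sq_abs]

lemma norm_E3 (x : EuclideanSpace ℝ (Fin 3)) :
    ‖x‖ = Real.sqrt (x 0 ^ 2 + x 1 ^ 2 + x 2 ^ 2) := by
  rw [EuclideanSpace.norm_eq, Fin.sum_univ_three]
  norm_num [sq_abs]

lemma annulus_meas : MeasurableSet {y : Fin 2 → ℝ | s₁ ≤ y 0 ^ 2 + y 1 ^ 2 ∧ y 0 ^ 2 + y 1 ^ 2 < s₂} := by
  apply MeasurableSet.inter
  · exact measurableSet_le measurable_const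
      (((measurable_pi_apply 0).pow_const 2).add ((measurable_pi_apply 1).pow_const 2))
  · exact measurableSet_lt
      (((measurable_pi_apply 0).pow_const 2).add ((measurable_pi_apply 1).pow_const 2))
      measurable_const

lemma annulus_area (s₁ s₂ : ℝ) (h₀ : 0 ≤ s₁) :
    volume {y : Fin 2 → ℝ | s₁ ≤ y 0 ^ 2 + y 1 ^ 2 ∧ y 0 ^ 2 + y 1 ^ 2 < s₂}
      = ENNReal.ofReal (Real.pi * (s₂ - s₁)) := by
  rcases le_or_gt s₂ s₁ with h | h
  · have he : {y : Fin 2 → ℝ | s₁ ≤ y 0 ^ 2 + y 1 ^ 2 ∧ y 0 ^ 2 + y 1 ^ 2 < s₂} = ∅ :=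
      Set.eq_empty_iff_forall_notMem.2 fun y hy => absurd (hy.1.trans_lt hy.2) (not_lt.2 h)
    rw [he, measure_empty, Eq.comm, ENNReal.ofReal_eq_zero]
    nlinarith [Real.pi_pos]
  · rw [← (EuclideanSpace.volume_preserving_symm_measurableEquiv_toLp (Fin 2)).measure_preimage
      annulus_meas.nullMeasurableSet]
    have hs₂ : 0 ≤ s₂ := h₀.trans h.le
    have hset : ((MeasurableEquiv.toLp 2 (Fin 2 → ℝ)).symm) ⁻¹'
        {y : Fin 2 → ℝ | s₁ ≤ y 0 ^ 2 + y 1 ^ 2 ∧ y 0 ^ 2 + y 1 ^ 2 < s₂}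
        = ball (0 : EuclideanSpace ℝ (Fin 2)) (Real.sqrt s₂) \
          ball (0 : EuclideanSpace ℝ (Fin 2)) (Real.sqrt s₁) := by
      ext y
      have h2 : ‖y‖ ^ 2 = y 0 ^ 2 + y 1 ^ 2 := by
        rw [norm_E2, Real.sq_sqrt (by positivity)]
      have hm : ((MeasurableEquiv.toLp 2 (Fin 2 → ℝ)).symm) y 0 = y 0 := rfl
      have hm1 : ((MeasurableEquiv.toLp 2 (Fin 2 → ℝ)).symm) y 1 = y 1 := rfl
      simp only [mem_preimage, mem_setOf_eq, mem_diff, mem_ball_zero_iff, hm, hm1, not_lt, ← h2]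
      rw [← Real.lt_sqrt (norm_nonneg y), and_comm]
      constructor
      · rintro ⟨hb, hs⟩
        refine ⟨hb, ?_⟩
        nlinarith [Real.sq_sqrt h₀, Real.sqrt_nonneg s₁, norm_nonneg y]
      · rintro ⟨hb, hs⟩
        refine ⟨hb, ?_⟩
        nlinarith [Real.sq_sqrt h₀, Real.sqrt_nonneg s₁, norm_nonneg y]
    rw [hset, measure_diff (ball_subset_ball (Real.sqrt_le_sqrt h.le))
        measurableSet_ball.nullMeasurableSet measure_ball_lt_top.ne,
      EuclideanSpace.volume_ball, EuclideanSpace.volume_ball]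
    simp only [Fintype.card_fin]
    rw [← ENNReal.ofReal_pow (Real.sqrt_nonneg _), ← ENNReal.ofReal_pow (Real.sqrt_nonneg _),
      Real.sq_sqrt hs₂, Real.sq_sqrt h₀, ← ENNReal.ofReal_mul hs₂, ← ENNReal.ofReal_mul h₀,
      ← ENNReal.ofReal_sub _ (by positivity)]
    have hg : Real.Gamma ((2 : ℕ) / 2 + 1) = 1 := by
      norm_num [Real.Gamma_two]
    rw [hg]
    congr 1
    rw [Real.sq_sqrt Real.pi_nonneg]
    ring

lemma S_meas (u : ℝ) : MeasurableSet {x : Fin 3 → ℝ |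
    x 0 ^ 2 + x 1 ^ 2 + x 2 ^ 2 < 1 ∧ x 0 ^ 2 ≤ u ^ 2 * (x 0 ^ 2 + x 1 ^ 2 + x 2 ^ 2)} := by
  have hm : Measurable fun x : Fin 3 → ℝ => x 0 ^ 2 + x 1 ^ 2 + x 2 ^ 2 :=
    (((measurable_pi_apply 0).pow_const 2).add ((measurable_pi_apply 1).pow_const 2)).add
      ((measurable_pi_apply 2).pow_const 2)
  exact (measurableSet_lt hm measurable_const).inter
    (measurableSet_le ((measurable_pi_apply 0).pow_const 2) (hm.const_mul _))

lemma T_meas (u : ℝ) : MeasurableSet {p : ℝ × (Fin 2 → ℝ) |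
    p.1 ^ 2 + (p.2 0 ^ 2 + p.2 1 ^ 2) < 1 ∧
    p.1 ^ 2 ≤ u ^ 2 * (p.1 ^ 2 + (p.2 0 ^ 2 + p.2 1 ^ 2))} := by
  have hm : Measurable fun p : ℝ × (Fin 2 → ℝ) => p.1 ^ 2 + (p.2 0 ^ 2 + p.2 1 ^ 2) :=
    (measurable_fst.pow_const 2).add
      ((((measurable_pi_apply 0).comp measurable_snd).pow_const 2).add
        (((measurable_pi_apply 1).comp measurable_snd).pow_const 2))
  exact (measurableSet_lt hm measurable_const).inter
    (measurableSet_le (measurable_fst.pow_const 2) (hm.const_mul _))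

lemma volume_S (u : ℝ) (hu : u ∈ Set.Ioc (0:ℝ) 1) :
    volume {x : Fin 3 → ℝ |
      x 0 ^ 2 + x 1 ^ 2 + x 2 ^ 2 < 1 ∧ x 0 ^ 2 ≤ u ^ 2 * (x 0 ^ 2 + x 1 ^ 2 + x 2 ^ 2)}
    = ENNReal.ofReal (4 / 3 * Real.pi * u) := by
  obtain ⟨hu0, hu1⟩ := hu
  have hp := measurePreserving_piFinSuccAbove (fun _ : Fin 3 => (volume : Measure ℝ)) 0
  have hpre : (MeasurableEquiv.piFinSuccAbove (fun _ : Fin 3 => ℝ) 0) ⁻¹'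
      {p : ℝ × (Fin 2 → ℝ) | p.1 ^ 2 + (p.2 0 ^ 2 + p.2 1 ^ 2) < 1 ∧
        p.1 ^ 2 ≤ u ^ 2 * (p.1 ^ 2 + (p.2 0 ^ 2 + p.2 1 ^ 2))}
      = {x : Fin 3 → ℝ |
        x 0 ^ 2 + x 1 ^ 2 + x 2 ^ 2 < 1 ∧ x 0 ^ 2 ≤ u ^ 2 * (x 0 ^ 2 + x 1 ^ 2 + x 2 ^ 2)} := by
    ext x
    simp only [Set.mem_preimage, Set.mem_setOf_eq]
    rw [show (MeasurableEquiv.piFinSuccAbove (fun _ : Fin 3 => ℝ) 0) x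
        = (x 0, fun j : Fin 2 => x j.succ) from rfl]
    norm_num [add_assoc]
  rw [← hpre, volume_pi, hp.measure_preimage (T_meas u).nullMeasurableSet,
    Measure.prod_apply (T_meas u)]
  simp only [← volume_pi]
  have hslice : ∀ t : ℝ,
      volume (Prod.mk t ⁻¹' {p : ℝ × (Fin 2 → ℝ) | p.1 ^ 2 + (p.2 0 ^ 2 + p.2 1 ^ 2) < 1 ∧
        p.1 ^ 2 ≤ u ^ 2 * (p.1 ^ 2 + (p.2 0 ^ 2 + p.2 1 ^ 2))})
      = ENNReal.ofReal (Real.pi * ((1 - t ^ 2 / u ^ 2))) := by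
    intro t
    have hss : Prod.mk t ⁻¹' {p : ℝ × (Fin 2 → ℝ) | p.1 ^ 2 + (p.2 0 ^ 2 + p.2 1 ^ 2) < 1 ∧
        p.1 ^ 2 ≤ u ^ 2 * (p.1 ^ 2 + (p.2 0 ^ 2 + p.2 1 ^ 2))}
        = {y : Fin 2 → ℝ | t ^ 2 * (1 - u ^ 2) / u ^ 2 ≤ y 0 ^ 2 + y 1 ^ 2 ∧
            y 0 ^ 2 + y 1 ^ 2 < 1 - t ^ 2} := by
      ext y
      simp only [Set.mem_preimage, Set.mem_setOf_eq, and_comm (a := _ < 1)]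
      constructor
      · rintro ⟨h1, h2⟩
        constructor
        · rw [div_le_iff₀ (by positivity)]
          nlinarith
        · linarith
      · rintro ⟨h1, h2⟩
        rw [div_le_iff₀ (by positivity)] at h1
        constructor
        · linarith
        · nlinarith
    have h0 : (0:ℝ) ≤ t ^ 2 * (1 - u ^ 2) / u ^ 2 :=
      div_nonneg (mul_nonneg (sq_nonneg t) (by nlinarith)) (by positivity)
    have heq : (1 - t ^ 2) - t ^ 2 * (1 - u ^ 2) / u ^ 2 = 1 - t ^ 2 / u ^ 2 := by
      field_simp
      ring
    rw [hss, annulus_area _ _ h0, heq]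
  simp only [hslice]
  have hcont : Continuous fun t : ℝ => Real.pi * (1 - t ^ 2 / u ^ 2) :=
    continuous_const.mul (continuous_const.sub ((continuous_pow 2).div_const _))
  have hind : (fun t : ℝ => ENNReal.ofReal (Real.pi * (1 - t ^ 2 / u ^ 2)))
      = (Set.Icc (-u) u).indicator
        (fun t => ENNReal.ofReal (Real.pi * (1 - t ^ 2 / u ^ 2))) := by
    funext t
    by_cases ht : t ∈ Set.Icc (-u) u
    · rw [Set.indicator_of_mem ht]
    · rw [Set.indicator_of_notMem ht, ENNReal.ofReal_eq_zero]
      rw [Set.mem_Icc, not_and_or, not_le, not_le] at ht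
      have htu : u ^ 2 < t ^ 2 := by rcases ht with h | h <;> nlinarith
      have : 1 - t ^ 2 / u ^ 2 ≤ 0 := by
        rw [sub_nonpos, le_div_iff₀ (by positivity)]
        nlinarith
      nlinarith [Real.pi_pos]
  rw [hind, lintegral_indicator measurableSet_Icc,
    ← ofReal_integral_eq_lintegral_ofReal (hcont.integrableOn_Icc)]
  · rw [integral_Icc_eq_integral_Ioc, ← intervalIntegral.integral_of_le (by linarith : -u ≤ u)]
    have hfun : (fun t : ℝ => Real.pi * (1 - t ^ 2 / u ^ 2))
        = fun t => Real.pi - Real.pi / u ^ 2 * t ^ 2 := by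
      funext t; field_simp
    rw [hfun, intervalIntegral.integral_sub intervalIntegrable_const
        ((intervalIntegral.intervalIntegrable_pow 2).const_mul _),
      intervalIntegral.integral_const, intervalIntegral.integral_const_mul, integral_pow]
    rw [show ENNReal.ofReal (4 / 3 * Real.pi * u) = ENNReal.ofReal (4 / 3 * Real.pi * u) from rfl]
    congr 1
    field_simp
    ring
  · filter_upwards [ae_restrict_mem measurableSet_Icc] with t ht
    have : t ^ 2 ≤ u ^ 2 := by
      rw [Set.mem_Icc] at ht
      nlinarith [ht.1, ht.2]
    have h1 : 0 ≤ 1 - t ^ 2 / u ^ 2 := by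
      rw [sub_nonneg, div_le_one (by positivity)]
      exact this
    positivity

lemma volume_B (u : ℝ) (hu : u ∈ Set.Ioc (0:ℝ) 1) :
    volume {x : EuclideanSpace ℝ (Fin 3) | ‖x‖ < 1 ∧ |x 0| ≤ u * ‖x‖}
      = ENNReal.ofReal (4 / 3 * Real.pi * u) := by
  rw [← volume_S u hu,
    ← (EuclideanSpace.volume_preserving_symm_measurableEquiv_toLp (Fin 3)).measure_preimage
      (S_meas u).nullMeasurableSet]
  congr 1
  ext x
  have hm0 : ((MeasurableEquiv.toLp 2 (Fin 3 → ℝ)).symm) x 0 = x 0 := rfl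
  have hm1 : ((MeasurableEquiv.toLp 2 (Fin 3 → ℝ)).symm) x 1 = x 1 := rfl
  have hm2 : ((MeasurableEquiv.toLp 2 (Fin 3 → ℝ)).symm) x 2 = x 2 := rfl
  have hn : ‖x‖ = Real.sqrt (x 0 ^ 2 + x 1 ^ 2 + x 2 ^ 2) := norm_E3 x
  have hnn : ‖x‖ ^ 2 = x 0 ^ 2 + x 1 ^ 2 + x 2 ^ 2 := by
    rw [hn, Real.sq_sqrt (by positivity)]
  simp only [Set.mem_preimage, Set.mem_setOf_eq, hm0, hm1, hm2, ← hnn]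
  constructor
  · rintro ⟨h1, h2⟩
    constructor
    · nlinarith [norm_nonneg x]
    · have : |x 0| ^ 2 ≤ (u * ‖x‖) ^ 2 := by
        apply pow_le_pow_left₀ (abs_nonneg _) h2
      rw [sq_abs] at this
      nlinarith
  · rintro ⟨h1, h2⟩
    have hnlt : ‖x‖ < 1 := by nlinarith [norm_nonneg x]
    refine ⟨hnlt, ?_⟩
    have : |x 0| ^ 2 ≤ (u * ‖x‖) ^ 2 := by
      rw [sq_abs, mul_pow]
      exact h2
    have hun : 0 ≤ u * ‖x‖ := mul_nonneg hu.1.le (norm_nonneg x)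
    nlinarith [abs_nonneg (x 0)]

lemma cone_eq (u : ℝ) (hu : 0 < u) :
    Set.Ioo (0:ℝ) 1 • (Subtype.val '' {t : sphere (0 : EuclideanSpace ℝ (Fin 3)) 1 |
        |((t : EuclideanSpace ℝ (Fin 3))) 0| ≤ u})
      = {x : EuclideanSpace ℝ (Fin 3) | ‖x‖ < 1 ∧ |x 0| ≤ u * ‖x‖} \ {0} := by
  ext x
  rw [Set.mem_smul]
  constructor
  · rintro ⟨r, hr, y, hy, rfl⟩
    obtain ⟨t, ht, rfl⟩ := hy
    have hnt : ‖(t : EuclideanSpace ℝ (Fin 3))‖ = 1 := by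
      simpa [mem_sphere_iff_norm] using t.2
    have hnorm : ‖r • (t : EuclideanSpace ℝ (Fin 3))‖ = r := by
      rw [norm_smul, hnt, mul_one, Real.norm_eq_abs, abs_of_pos hr.1]
    refine ⟨⟨by rw [hnorm]; exact hr.2, ?_⟩, ?_⟩
    · have happ : (r • (t : EuclideanSpace ℝ (Fin 3))) 0
          = r * (t : EuclideanSpace ℝ (Fin 3)) 0 := rfl
      rw [happ, hnorm, abs_mul, abs_of_pos hr.1, mul_comm u r]
      exact mul_le_mul_of_nonneg_left ht hr.1.le
    · simp only [Set.mem_singleton_iff]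
      intro h0
      have := hnorm
      rw [h0, norm_zero] at this
      exact hr.1.ne this
  · rintro ⟨⟨h1, h2⟩, h0⟩
    have hx0 : x ≠ 0 := by simpa using h0
    have hnx : 0 < ‖x‖ := norm_pos_iff.2 hx0
    refine ⟨‖x‖, ⟨hnx, h1⟩, (‖x‖⁻¹ • x : EuclideanSpace ℝ (Fin 3)), ?_, ?_⟩
    · refine ⟨⟨‖x‖⁻¹ • x, ?_⟩, ?_, rfl⟩
      · simp [mem_sphere_iff_norm, norm_smul, abs_of_pos (inv_pos.2 hnx),
          inv_mul_cancel₀ hnx.ne']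
      · show |(‖x‖⁻¹ • x) 0| ≤ u
        have happ : (‖x‖⁻¹ • x) 0 = ‖x‖⁻¹ * x 0 := rfl
        rw [happ, abs_mul, abs_of_pos (inv_pos.2 hnx)]
        rw [inv_mul_le_iff₀ hnx, mul_comm]
        exact h2
    · rw [smul_inv_smul₀ hnx.ne']

lemma coord_cont (i : Fin 3) :
    Continuous fun t : sphere (0 : EuclideanSpace ℝ (Fin 3)) 1 =>
      (t : EuclideanSpace ℝ (Fin 3)) i :=
  (continuous_apply i).comp ((PiLp.continuous_ofLp (p := 2) (β := fun _ : Fin 3 => ℝ)).comp continuous_subtype_val)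

lemma cap_meas (u : ℝ) : MeasurableSet {t : sphere (0 : EuclideanSpace ℝ (Fin 3)) 1 |
    |((t : EuclideanSpace ℝ (Fin 3))) 0| ≤ u} :=
  measurableSet_le ((coord_cont 0).abs.measurable) measurable_const

lemma nu_cap (u : ℝ) (hu : u ∈ Set.Ioc (0:ℝ) 1) :
    (volume : Measure (EuclideanSpace ℝ (Fin 3))).toSphere
      {t : sphere (0 : EuclideanSpace ℝ (Fin 3)) 1 |
        |((t : EuclideanSpace ℝ (Fin 3))) 0| ≤ u}
      = ENNReal.ofReal (4 * Real.pi * u) := by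
  rw [Measure.toSphere_apply' _ (cap_meas u)]
  rw [show ((↑) '' {t : sphere (0 : EuclideanSpace ℝ (Fin 3)) 1 |
      |((t : EuclideanSpace ℝ (Fin 3))) 0| ≤ u}) = (Subtype.val ''
      {t : sphere (0 : EuclideanSpace ℝ (Fin 3)) 1 |
      |((t : EuclideanSpace ℝ (Fin 3))) 0| ≤ u}) from rfl, cone_eq u hu.1,
    measure_diff_null (measure_singleton _), volume_B u hu]
  rw [finrank_euclideanSpace_fin]
  rw [show ((3:ℕ) : ℝ≥0∞) = ENNReal.ofReal (3:ℝ) by norm_num, ← ENNReal.ofReal_mul (by norm_num)]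
  congr 1
  ring

lemma nu_cap0 :
    (volume : Measure (EuclideanSpace ℝ (Fin 3))).toSphere
      {t : sphere (0 : EuclideanSpace ℝ (Fin 3)) 1 |
        |((t : EuclideanSpace ℝ (Fin 3))) 0| ≤ 0} = 0 := by
  rw [Measure.toSphere_apply' _ (cap_meas 0)]
  have hsub : (Set.Ioo (0:ℝ) 1 • (Subtype.val '' {t : sphere (0 : EuclideanSpace ℝ (Fin 3)) 1 |
      |((t : EuclideanSpace ℝ (Fin 3))) 0| ≤ 0}))
      ⊆ {x : EuclideanSpace ℝ (Fin 3) | x 0 = 0} := by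
    rintro x ⟨r, hr, y, hy, rfl⟩
    obtain ⟨t, ht, rfl⟩ := hy
    have ht0 : (t : EuclideanSpace ℝ (Fin 3)) 0 = 0 := abs_nonpos_iff.1 ht
    show (r • (t : EuclideanSpace ℝ (Fin 3))) 0 = 0
    show r * (t : EuclideanSpace ℝ (Fin 3)) 0 = 0
    rw [ht0, mul_zero]
  have hnull : volume {x : EuclideanSpace ℝ (Fin 3) | x 0 = 0} = 0 := by
    have hpre : (MeasurableEquiv.piFinSuccAbove (fun _ : Fin 3 => ℝ) 0) ⁻¹'
        (({0} : Set ℝ) ×ˢ (Set.univ : Set (Fin 2 → ℝ))) = {x : Fin 3 → ℝ | x 0 = 0} := by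
      ext x
      simp only [Set.mem_preimage, Set.mem_prod, Set.mem_singleton_iff, Set.mem_univ, and_true,
        Set.mem_setOf_eq]
      rfl
    have h2 : volume {x : Fin 3 → ℝ | x 0 = 0} = 0 := by
      rw [← hpre, volume_pi,
        (measurePreserving_piFinSuccAbove (fun _ : Fin 3 => (volume : Measure ℝ)) 0
          ).measure_preimage
          ((measurableSet_singleton (0:ℝ)).prod MeasurableSet.univ).nullMeasurableSet,
        Measure.prod_prod]
      simp
    have hrfl : {x : EuclideanSpace ℝ (Fin 3) | x 0 = 0}
        = ((MeasurableEquiv.toLp 2 (Fin 3 → ℝ)).symm) ⁻¹' {x : Fin 3 → ℝ | x 0 = 0} := rfl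
    rw [hrfl, (EuclideanSpace.volume_preserving_symm_measurableEquiv_toLp (Fin 3)).measure_preimage
      ((measurableSet_eq_fun (measurable_pi_apply 0) measurable_const).nullMeasurableSet)]
    exact h2
  rw [measure_mono_null hsub hnull, mul_zero]

lemma sphere_normSq (t : sphere (0 : EuclideanSpace ℝ (Fin 3)) 1) :
    ((t : EuclideanSpace ℝ (Fin 3)) 0) ^ 2 + ((t : EuclideanSpace ℝ (Fin 3)) 1) ^ 2 +
      ((t : EuclideanSpace ℝ (Fin 3)) 2) ^ 2 = 1 := by
  have hnt : ‖(t : EuclideanSpace ℝ (Fin 3))‖ = 1 := by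
    simpa [mem_sphere_iff_norm] using t.2
  have := norm_E3 (t : EuclideanSpace ℝ (Fin 3))
  rw [hnt] at this
  have h := congrArg (· ^ 2) this
  simpa [Real.sq_sqrt (by positivity :
    (0:ℝ) ≤ ((t : EuclideanSpace ℝ (Fin 3)) 0) ^ 2 + ((t : EuclideanSpace ℝ (Fin 3)) 1) ^ 2 +
      ((t : EuclideanSpace ℝ (Fin 3)) 2) ^ 2)] using h.symm

lemma univ_eq_cap1 :
    (Set.univ : Set (sphere (0 : EuclideanSpace ℝ (Fin 3)) 1))
      = {t : sphere (0 : EuclideanSpace ℝ (Fin 3)) 1 |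
          |((t : EuclideanSpace ℝ (Fin 3))) 0| ≤ 1} := by
  ext t
  simp only [Set.mem_univ, Set.mem_setOf_eq, true_iff]
  have := sphere_normSq t
  rw [abs_le]
  constructor <;> nlinarith [sq_nonneg ((t : EuclideanSpace ℝ (Fin 3)) 1),
    sq_nonneg ((t : EuclideanSpace ℝ (Fin 3)) 2),
    sq_nonneg ((t : EuclideanSpace ℝ (Fin 3)) 0 + 1),
    sq_nonneg ((t : EuclideanSpace ℝ (Fin 3)) 0 - 1)]

lemma nu_univ :
    (volume : Measure (EuclideanSpace ℝ (Fin 3))).toSphere Set.univ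
      = ENNReal.ofReal (4 * Real.pi) := by
  rw [univ_eq_cap1, nu_cap 1 (by norm_num), mul_one]

lemma sphereUniform_cap (b : ℝ) (hb : b ∈ Set.Icc (0:ℝ) 1) :
    sphereUniform {t : sphere (0 : EuclideanSpace ℝ (Fin 3)) 1 |
        ((t : EuclideanSpace ℝ (Fin 3)) 0) ^ 2 ≤ b}
      = ENNReal.ofReal (Real.sqrt b) := by
  have hset : {t : sphere (0 : EuclideanSpace ℝ (Fin 3)) 1 |
      ((t : EuclideanSpace ℝ (Fin 3)) 0) ^ 2 ≤ b}
      = {t : sphere (0 : EuclideanSpace ℝ (Fin 3)) 1 |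
          |((t : EuclideanSpace ℝ (Fin 3))) 0| ≤ Real.sqrt b} := by
    ext t
    simp only [Set.mem_setOf_eq]
    constructor
    · intro h
      rw [← Real.sqrt_sq_eq_abs]
      exact Real.sqrt_le_sqrt h
    · intro h
      have := pow_le_pow_left₀ (abs_nonneg ((t : EuclideanSpace ℝ (Fin 3)) 0)) h 2
      rwa [sq_abs, Real.sq_sqrt hb.1] at this
  rw [hset, sphereUniform, Measure.smul_apply, smul_eq_mul, nu_univ]
  rcases eq_or_lt_of_le hb.1 with hb0 | hb0
  · rw [← hb0, Real.sqrt_zero, nu_cap0, mul_zero, ENNReal.ofReal_zero]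
  · have hsb : Real.sqrt b ∈ Set.Ioc (0:ℝ) 1 :=
      ⟨Real.sqrt_pos.2 hb0, by
        rw [show (1:ℝ) = Real.sqrt 1 by rw [Real.sqrt_one]]
        exact Real.sqrt_le_sqrt hb.2⟩
    rw [nu_cap _ hsb,
      ENNReal.ofReal_mul (p := 4 * Real.pi) (q := Real.sqrt b) (by positivity), ← mul_assoc,
      ENNReal.inv_mul_cancel (by simp [Real.pi_pos] : ENNReal.ofReal (4 * Real.pi) ≠ 0)
        ENNReal.ofReal_ne_top, one_mul]

instance : IsProbabilityMeasure sphereUniform := by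
  constructor
  rw [sphereUniform, Measure.smul_apply, smul_eq_mul, nu_univ,
    ENNReal.inv_mul_cancel (by simp [Real.pi_pos] : ENNReal.ofReal (4 * Real.pi) ≠ 0)
      ENNReal.ofReal_ne_top]

lemma densInt (c x : ℝ) (hc0 : 0 < c) (hx : x ∈ Set.Icc ((2 - c)/2) 1) :
    (∫⁻ F in Set.Ioc ((2 - c)/2) x,
        ENNReal.ofReal (1 / Real.sqrt (c * (2 * F - 2 + c))))
      = ENNReal.ofReal (Real.sqrt ((2 * x - 2 + c)/c)) := by
  set a : ℝ := (2 - c)/2 with ha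
  set g : ℝ → ℝ := fun F => (Real.sqrt (2 * c))⁻¹ * ((F - a) ^ (-(1/2) : ℝ)) with hg
  have hgi : IntervalIntegrable g volume a x := by
    have h := (intervalIntegral.intervalIntegrable_rpow' (by norm_num : (-1:ℝ) < -(1/2))
      (a := 0) (b := x - a)).comp_sub_right a
    simp only [zero_add, sub_add_cancel] at h
    exact h.const_mul _
  have hEq : ∀ F ∈ Set.Ioc a x, 1 / Real.sqrt (c * (2 * F - 2 + c)) = g F := by
    intro F hF
    have hFa : 0 < F - a := by
      rw [ha] at hF ⊢
      have := hF.1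
      linarith
    have h1 : c * (2 * F - 2 + c) = 2 * c * (F - a) := by rw [ha]; ring
    rw [h1, Real.sqrt_mul (by positivity) (F - a)]
    show _ = (Real.sqrt (2 * c))⁻¹ * ((F - a) ^ (-(1/2) : ℝ))
    rw [Real.sqrt_eq_rpow (F - a), Real.rpow_neg hFa.le, one_div, mul_inv]
  calc (∫⁻ F in Set.Ioc a x, ENNReal.ofReal (1 / Real.sqrt (c * (2 * F - 2 + c))))
      = ∫⁻ F in Set.Ioc a x, ENNReal.ofReal (g F) := by
        apply setLIntegral_congr_fun measurableSet_Ioc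
        exact fun F hF => by rw [hEq F hF]
    _ = ENNReal.ofReal (∫ F in Set.Ioc a x, g F) := by
        rw [← ofReal_integral_eq_lintegral_ofReal
          ((intervalIntegrable_iff_integrableOn_Ioc_of_le hx.1).1 hgi)]
        filter_upwards [ae_restrict_mem measurableSet_Ioc] with F hF
        have hFa : 0 < F - a := by
          have := hF.1; rw [ha] at this ⊢; linarith
        have := Real.rpow_nonneg hFa.le (-(1/2) : ℝ)
        positivity
    _ = ENNReal.ofReal (Real.sqrt ((2 * x - 2 + c)/c)) := by
        congr 1
        rw [← intervalIntegral.integral_of_le hx.1, hg]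
        rw [intervalIntegral.integral_const_mul,
          intervalIntegral.integral_comp_sub_right (fun y => y ^ (-(1/2) : ℝ)) a, sub_self,
          integral_rpow (Or.inl (by norm_num : (-1:ℝ) < -(1/2)))]
        have hT : 0 ≤ x - a := by linarith [hx.1]
        have h0 : (0:ℝ) ^ ((-(1/2) : ℝ) + 1) = 0 := Real.zero_rpow (by norm_num)
        rw [h0, sub_zero]
        have hxr : (x - a) ^ ((-(1/2):ℝ) + 1) = Real.sqrt (x - a) := by
          rw [Real.sqrt_eq_rpow]; norm_num
        rw [hxr]
        have h2T : (2 * x - 2 + c)/c = 2 * (x - a) / c := by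
          rw [ha]; field_simp; ring
        rw [h2T, Real.sqrt_div (by positivity) c, Real.sqrt_mul (by norm_num) (x - a),
          Real.sqrt_mul (by norm_num) c]
        have hs2 : Real.sqrt 2 ≠ 0 := by positivity
        have hsc : Real.sqrt c ≠ 0 := by positivity
        have h22 : Real.sqrt 2 * Real.sqrt 2 = 2 := Real.mul_self_sqrt (by norm_num)
        field_simp
        rw [Real.sq_sqrt (by norm_num : (0:ℝ) ≤ 2)]
        ring

/-- For c ∈ (0,1], F takes values in [(2−c)/2, 1] and has density
1/√(c(2F−2+c)) on ((2−c)/2, 1] and 0 outside. -/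
theorem phase_flip_fidelity_distribution (c : ℝ) (hc : c ∈ Ioc (0 : ℝ) 1) :
    (∀ t : sphere (0 : EuclideanSpace ℝ (Fin 3)) 1,
        Fpf c t ∈ Icc ((2 - c) / 2) 1) ∧
    Measure.map (Fpf c) sphereUniform
      = volume.withDensity (fun F =>
          ENNReal.ofReal
            (if F ∈ Ioc ((2 - c) / 2) 1
              then 1 / Real.sqrt (c * (2 * F - 2 + c)) else 0)) := by
  obtain ⟨hc0, hc1⟩ := hc
  have hbound : ∀ t : sphere (0 : EuclideanSpace ℝ (Fin 3)) 1,
      Fpf c t ∈ Icc ((2 - c) / 2) 1 := by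
    intro t
    have hsum := sphere_normSq t
    constructor
    · simp only [Fpf]
      nlinarith [sq_nonneg ((t : EuclideanSpace ℝ (Fin 3)) 0)]
    · simp only [Fpf]
      nlinarith [sq_nonneg ((t : EuclideanSpace ℝ (Fin 3)) 0),
        sq_nonneg ((t : EuclideanSpace ℝ (Fin 3)) 1),
        sq_nonneg ((t : EuclideanSpace ℝ (Fin 3)) 2)]
  refine ⟨hbound, ?_⟩
  have hFc : Continuous (Fpf c) :=
    continuous_const.mul ((continuous_const.add ((coord_cont 0).pow 2)).add
      (continuous_const.mul (((coord_cont 1).pow 2).add ((coord_cont 2).pow 2))))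
  have hpre : ∀ x : ℝ, Fpf c ⁻¹' Iic x = {t : sphere (0 : EuclideanSpace ℝ (Fin 3)) 1 |
      ((t : EuclideanSpace ℝ (Fin 3)) 0) ^ 2 ≤ (2 * x - 2 + c)/c} := by
    intro x
    ext t
    have hsum := sphere_normSq t
    simp only [Set.mem_preimage, Set.mem_Iic, Set.mem_setOf_eq, le_div_iff₀ hc0, Fpf]
    constructor <;> intro h <;> nlinarith
  haveI : IsProbabilityMeasure (Measure.map (Fpf c) sphereUniform) :=
    Measure.isProbabilityMeasure_map hFc.measurable.aemeasurable
  refine Measure.ext_of_Iic _ _ fun x => ?_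
  rw [Measure.map_apply hFc.measurable measurableSet_Iic,
    withDensity_apply _ measurableSet_Iic, hpre x]
  have hdens : (fun F => ENNReal.ofReal
      (if F ∈ Ioc ((2 - c) / 2) 1 then 1 / Real.sqrt (c * (2 * F - 2 + c)) else 0))
      = (Ioc ((2 - c) / 2) 1).indicator
          (fun F => ENNReal.ofReal (1 / Real.sqrt (c * (2 * F - 2 + c)))) := by
    funext F
    by_cases h : F ∈ Ioc ((2 - c) / 2) 1 <;> simp [h]
  rw [hdens, lintegral_indicator measurableSet_Ioc, Measure.restrict_restrict measurableSet_Ioc,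
    Set.Ioc_inter_Iic]
  rcases lt_or_ge x ((2 - c)/2) with hxa | hax
  · have hmin : min 1 x ≤ (2 - c)/2 := (min_le_right 1 x).trans hxa.le
    rw [Set.Ioc_eq_empty (by exact fun h => absurd hmin (not_le.2 h)), Measure.restrict_empty,
      lintegral_zero_measure]
    have hempty : {t : sphere (0 : EuclideanSpace ℝ (Fin 3)) 1 |
        ((t : EuclideanSpace ℝ (Fin 3)) 0) ^ 2 ≤ (2 * x - 2 + c)/c} = ∅ := by
      apply Set.eq_empty_iff_forall_notMem.2
      intro t ht
      have hneg : (2 * x - 2 + c)/c < 0 :=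
        div_neg_of_neg_of_pos (by linarith) hc0
      exact absurd (le_trans (sq_nonneg _) (Set.mem_setOf_eq ▸ ht)) (not_le.2 hneg)
    rw [hempty, measure_empty]
  · rcases le_or_gt x 1 with hx1 | hx1
    · rw [min_eq_right hx1, densInt c x hc0 ⟨hax, hx1⟩]
      apply sphereUniform_cap
      constructor
      · apply div_nonneg _ hc0.le; linarith
      · rw [div_le_one hc0]; linarith
    · rw [min_eq_left hx1.le, densInt c 1 hc0 ⟨by linarith, le_refl 1⟩]
      have huniv : {t : sphere (0 : EuclideanSpace ℝ (Fin 3)) 1 |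
          ((t : EuclideanSpace ℝ (Fin 3)) 0) ^ 2 ≤ (2 * x - 2 + c)/c} = Set.univ := by
        apply Set.eq_univ_iff_forall.2
        intro t
        have hsum := sphere_normSq t
        have h1 : ((t : EuclideanSpace ℝ (Fin 3)) 0) ^ 2 ≤ 1 := by
          nlinarith [sq_nonneg ((t : EuclideanSpace ℝ (Fin 3)) 1),
            sq_nonneg ((t : EuclideanSpace ℝ (Fin 3)) 2)]
        have h2 : (1:ℝ) ≤ (2 * x - 2 + c)/c := by
          rw [le_div_iff₀ hc0]; linarith
        exact le_trans h1 h2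
      rw [huniv]
      have : (2 * 1 - 2 + c)/c = 1 := by field_simp; ring
      rw [this, Real.sqrt_one, ENNReal.ofReal_one]
      exact measure_univ
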